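/- arXiv:2406.10036 — 2 statements merged into one kernel-verified Lean document; each statement's English description precedes it below -/
import Mathlib

section
/- Perfect realism doubles the distortion under posterior sampling: let X be a square-integrable random vector, m a random variable (the message), X̃ = E[X|m], and let X̂ be drawn conditionally i.i.d. with X given m, i.e., X̂ ⊥ X | m and P_{X̂|m} = P_{X|m}. Then E[‖X − X̂‖²] = 2 E[‖X − X̃‖²]. -/
open MeasureTheory ProbabilityTheory

section Aux
open MeasurableSpace Set
lemma my_countable_generatePiSystem {α : Type*} {S : Set (Set α)} (hS : S.Countable) :
    (generatePiSystem S).Countable := by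
  have hsub : generatePiSystem S ⊆ Set.sInter '' {T : Set (Set α) | T.Finite ∧ T ⊆ S} := by
    intro s hs
    induction hs with
    | base h => exact ⟨{_}, ⟨Set.finite_singleton _, by simpa⟩, by simp⟩
    | inter h_s h_t h_ne ihs iht =>
      obtain ⟨T1, ⟨hT1f, hT1s⟩, rfl⟩ := ihs
      obtain ⟨T2, ⟨hT2f, hT2s⟩, rfl⟩ := iht
      exact ⟨T1 ∪ T2, ⟨hT1f.union hT2f, Set.union_subset hT1s hT2s⟩, by rw [Set.sInter_union]⟩
  exact ((Set.countable_setOf_finite_subset hS).image _).mono hsub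

lemma my_ae_indepFun {α Ω E F : Type*} {mα : MeasurableSpace α} {mΩ : MeasurableSpace Ω}
    [mE : MeasurableSpace E] [mF : MeasurableSpace F]
    [MeasurableSpace.CountablyGenerated E] [MeasurableSpace.CountablyGenerated F]
    {κ : Kernel α Ω} [IsMarkovKernel κ] {ν : Measure α}
    {f : Ω → E} {g : Ω → F} (hf : Measurable f) (hg : Measurable g)
    (h : Kernel.IndepFun f g κ ν) : ∀ᵐ a ∂ν, IndepFun f g (κ a) := by
  set S : Set (Set E) := generatePiSystem (countableGeneratingSet E) with hSdef
  set T : Set (Set F) := generatePiSystem (countableGeneratingSet F) with hTdef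
  have hSc : S.Countable := my_countable_generatePiSystem (countable_countableGeneratingSet)
  have hTc : T.Countable := my_countable_generatePiSystem (countable_countableGeneratingSet)
  have hSm : ∀ s ∈ S, MeasurableSet s := fun s hs =>
    generatePiSystem_measurableSet (fun t ht => measurableSet_countableGeneratingSet ht) _ hs
  have hTm : ∀ t ∈ T, MeasurableSet t := fun t ht =>
    generatePiSystem_measurableSet (fun u hu => measurableSet_countableGeneratingSet hu) _ ht
  have key : ∀ᵐ a ∂ν, ∀ s ∈ S, ∀ t ∈ T,
      κ a (f ⁻¹' s ∩ g ⁻¹' t) = κ a (f ⁻¹' s) * κ a (g ⁻¹' t) := by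
    rw [ae_ball_iff hSc]
    intro s hs
    rw [ae_ball_iff hTc]
    intro t ht
    exact (Kernel.indepFun_iff_measure_inter_preimage_eq_mul.mp h) s t (hSm s hs) (hTm t ht)
  filter_upwards [key] with a ha
  have hgenE : mE = generateFrom S := by
    rw [hSdef, generateFrom_generatePiSystem_eq, generateFrom_countableGeneratingSet]
  have hgenF : mF = generateFrom T := by
    rw [hTdef, generateFrom_generatePiSystem_eq, generateFrom_countableGeneratingSet]
  have h1 : mE.comap f = generateFrom {u | ∃ s ∈ S, f ⁻¹' s = u} := by
    conv_lhs => rw [hgenE]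
    rw [MeasurableSpace.comap_generateFrom]
    rfl
  have h2 : mF.comap g = generateFrom {u | ∃ t ∈ T, g ⁻¹' t = u} := by
    conv_lhs => rw [hgenF]
    rw [MeasurableSpace.comap_generateFrom]
    rfl
  have hps1 : IsPiSystem {u | ∃ s ∈ S, f ⁻¹' s = u} :=
    (isPiSystem_generatePiSystem _).comap f
  have hps2 : IsPiSystem {u | ∃ t ∈ T, g ⁻¹' t = u} :=
    (isPiSystem_generatePiSystem _).comap g
  have hind : IndepSets {u | ∃ s ∈ S, f ⁻¹' s = u} {u | ∃ t ∈ T, g ⁻¹' t = u} (κ a) := by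
    rintro t1 t2 ⟨s, hs, rfl⟩ ⟨t, ht, rfl⟩
    exact Filter.Eventually.of_forall fun _ => ha s hs t ht
  exact IndepSets.indep hf.comap_le hg.comap_le hps1 hps2 h1 h2 hind

lemma my_integrable_mul_of_sq {Ω : Type*} [MeasurableSpace Ω] {μ : Measure Ω} {f g : Ω → ℝ}
    (hf : AEStronglyMeasurable f μ) (hg : AEStronglyMeasurable g μ)
    (hf2 : Integrable (fun ω => f ω ^ 2) μ) (hg2 : Integrable (fun ω => g ω ^ 2) μ) :
    Integrable (fun ω => f ω * g ω) μ := by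
  refine Integrable.mono' ((hf2.add hg2).const_mul (1/2)) (hf.mul hg) ?_
  filter_upwards with x
  rw [Real.norm_eq_abs, abs_mul]
  simp only [Pi.add_apply]
  nlinarith [sq_nonneg (|f x| - |g x|), sq_abs (f x), sq_abs (g x), abs_nonneg (f x),
    abs_nonneg (g x)]

lemma my_condexp_clm {α E : Type*} [NormedAddCommGroup E] [NormedSpace ℝ E] [CompleteSpace E]
    {m m0 : MeasurableSpace α} {μ : Measure α} [IsFiniteMeasure μ] (hm : m ≤ m0)
    (L : E →L[ℝ] ℝ) {f : α → E} (hf : Integrable f μ) :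
    (fun ω => L ((μ[f|m]) ω)) =ᵐ[μ] μ[fun ω => L (f ω)|m] := by
  refine ae_eq_condExp_of_forall_setIntegral_eq hm (L.integrable_comp hf)
    (fun s _ _ => (L.integrable_comp integrable_condExp).integrableOn)
    (fun s hs _ => ?_) ?_
  · rw [L.integral_comp_comm integrable_condExp.integrableOn,
      setIntegral_condExp hm hf hs, L.integral_comp_comm hf.integrableOn]
  · exact (L.continuous.comp_stronglyMeasurable (stronglyMeasurable_condExp (m := m) (f := f) (μ := μ))).aestronglyMeasurable

end Aux

/-- Posterior sampling doubles the distortion: if `X̂` is conditionally independent of `X`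
given the message `m` and has the same conditional law given `m`, then
`E[‖X − X̂‖²] = 2 E[‖X − E[X|m]‖²]`. -/
theorem stmt_7 {Ω β : Type*} [MeasurableSpace Ω] [StandardBorelSpace Ω] [MeasurableSpace β]
    {μ : Measure Ω} [IsProbabilityMeasure μ] {n : ℕ}
    (X Xhat : Ω → EuclideanSpace ℝ (Fin n)) (m : Ω → β)
    (hX : Measurable X) (hXhat : Measurable Xhat) (hm : Measurable m)
    (hX2 : MemLp X 2 μ) (hXhat2 : MemLp Xhat 2 μ)
    (hci : CondIndepFun (MeasurableSpace.comap m inferInstance) hm.comap_le X Xhat μ)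
    (hdist : condDistrib Xhat m μ = condDistrib X m μ) :
    ∫ ω, ‖X ω - Xhat ω‖ ^ 2 ∂μ
      = 2 * ∫ ω, ‖X ω - (μ[X | MeasurableSpace.comap m inferInstance]) ω‖ ^ 2 ∂μ := by
  classical
  have hm' := hm.comap_le
  set T : Ω → EuclideanSpace ℝ (Fin n) := μ[X|(MeasurableSpace.comap m inferInstance)] with hTdef
  set gi : Fin n → Ω → ℝ := fun i => μ[fun ω => X ω i|(MeasurableSpace.comap m inferInstance)] with hgidef
  have hev : ∀ i, Measurable (fun v : EuclideanSpace ℝ (Fin n) => v i) := fun i => by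
    simpa [PiLp.proj_apply] using
      (EuclideanSpace.proj (𝕜 := ℝ) (ι := Fin n) i).continuous.measurable
  have hevC : ∀ i, Continuous (fun v : EuclideanSpace ℝ (Fin n) => v i) := fun i => by
    simpa [PiLp.proj_apply] using
      (EuclideanSpace.proj (𝕜 := ℝ) (ι := Fin n) i).continuous
  have hXi2 : ∀ i, MemLp (fun ω => X ω i) 2 μ := fun i => by
    simpa [Function.comp_def, PiLp.proj_apply] using
      (EuclideanSpace.proj (𝕜 := ℝ) (ι := Fin n) i).comp_memLp' hX2
  have hYi2 : ∀ i, MemLp (fun ω => Xhat ω i) 2 μ := fun i => by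
    simpa [Function.comp_def, PiLp.proj_apply] using
      (EuclideanSpace.proj (𝕜 := ℝ) (ι := Fin n) i).comp_memLp' hXhat2
  have hXiInt : ∀ i, Integrable (fun ω => X ω i) μ := fun i => (hXi2 i).integrable one_le_two
  have hYiInt : ∀ i, Integrable (fun ω => Xhat ω i) μ := fun i => (hYi2 i).integrable one_le_two
  have hXisq : ∀ i, Integrable (fun ω => X ω i ^ 2) μ := fun i => (hXi2 i).integrable_sq
  have hYisq : ∀ i, Integrable (fun ω => Xhat ω i ^ 2) μ := fun i => (hYi2 i).integrable_sq
  have hXYint : ∀ i, Integrable (fun ω => X ω i * Xhat ω i) μ := fun i =>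
    my_integrable_mul_of_sq (hXi2 i).aestronglyMeasurable (hYi2 i).aestronglyMeasurable
      (hXisq i) (hYisq i)
  -- same conditional law consequences
  have hsame : ∀ (f : EuclideanSpace ℝ (Fin n) → ℝ), StronglyMeasurable f →
      Integrable (fun ω => f (X ω)) μ → Integrable (fun ω => f (Xhat ω)) μ →
      μ[(fun ω => f (Xhat ω))|(MeasurableSpace.comap m inferInstance)] =ᵐ[μ] μ[(fun ω => f (X ω))|(MeasurableSpace.comap m inferInstance)] := by
    intro f hf hint hinthat
    have h1 := condExp_ae_eq_integral_condDistrib hm hXhat.aemeasurable hf hinthat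
    have h2 := condExp_ae_eq_integral_condDistrib hm hX.aemeasurable hf hint
    rw [hdist] at h1
    exact h1.trans h2.symm
  have hF4 : ∀ i, μ[(fun ω => Xhat ω i)|(MeasurableSpace.comap m inferInstance)] =ᵐ[μ] gi i := fun i =>
    hsame (fun v => v i) (hevC i).stronglyMeasurable (hXiInt i) (hYiInt i)
  have hF5 : ∀ i, ∫ ω, Xhat ω i ^ 2 ∂μ = ∫ ω, X ω i ^ 2 ∂μ := by
    intro i
    have h := hsame (fun v => v i ^ 2) ((hevC i).pow 2).stronglyMeasurable (hXisq i) (hYisq i)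
    rw [← integral_condExp hm' (f := fun ω => Xhat ω i ^ 2), ← integral_condExp hm' (f := fun ω => X ω i ^ 2)]
    exact integral_congr_ae h
  -- conditional independence: cross term
  have hindep : ∀ᵐ ω ∂μ, IndepFun X Xhat (condExpKernel μ (MeasurableSpace.comap m inferInstance) ω) :=
    ae_of_ae_trim hm' (my_ae_indepFun hX hXhat hci)
  have hkey : ∀ i, μ[(fun ω => X ω i * Xhat ω i)|(MeasurableSpace.comap m inferInstance)] =ᵐ[μ] fun ω => gi i ω * gi i ω := by
    intro i
    have h1 := condExp_ae_eq_integral_condExpKernel hm' (hXYint i)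
    have h2 := (hXiInt i).condExpKernel_ae (m := (MeasurableSpace.comap m inferInstance))
    have h3 := (hYiInt i).condExpKernel_ae (m := (MeasurableSpace.comap m inferInstance))
    have h4 := condExp_ae_eq_integral_condExpKernel hm' (hXiInt i)
    have h5 := condExp_ae_eq_integral_condExpKernel hm' (hYiInt i)
    filter_upwards [h1, hindep, h2, h3, h4, h5, hF4 i] with ω hω hind hInt1 hInt2 hω4 hω5 hω7
    rw [hω]
    have hmul : ∫ y, X y i * Xhat y i ∂(condExpKernel μ (MeasurableSpace.comap m inferInstance) ω)
        = (∫ y, X y i ∂(condExpKernel μ (MeasurableSpace.comap m inferInstance) ω)) * ∫ y, Xhat y i ∂(condExpKernel μ (MeasurableSpace.comap m inferInstance) ω) :=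
      (hind.comp (hev i) (hev i)).integral_fun_mul_eq_mul_integral hInt1.aestronglyMeasurable hInt2.aestronglyMeasurable
    rw [hmul, ← hω4, ← hω5, hω7]
  have hgisq : ∀ i, Integrable (fun ω => gi i ω ^ 2) μ := by
    intro i
    have h := (integrable_condExp (m := (MeasurableSpace.comap m inferInstance)) (f := fun ω => X ω i * Xhat ω i)).congr (hkey i)
    exact h.congr (Filter.Eventually.of_forall fun ω => by ring)
  have hXgiInt : ∀ i, Integrable (fun ω => X ω i * gi i ω) μ := fun i =>
    my_integrable_mul_of_sq (hXi2 i).aestronglyMeasurable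
      ((stronglyMeasurable_condExp.mono hm').aestronglyMeasurable) (hXisq i) (hgisq i)
  have hF6 : ∀ i, ∫ ω, X ω i * Xhat ω i ∂μ = ∫ ω, gi i ω ^ 2 ∂μ := by
    intro i
    rw [← integral_condExp hm' (f := fun ω => X ω i * Xhat ω i)]
    refine integral_congr_ae ((hkey i).mono fun ω h => ?_)
    rw [h]; ring
  have hF7 : ∀ i, ∫ ω, X ω i * gi i ω ∂μ = ∫ ω, gi i ω ^ 2 ∂μ := by
    intro i
    have hfg : Integrable (gi i * fun ω => X ω i) μ :=
      (hXgiInt i).congr (Filter.Eventually.of_forall fun ω => by simp [mul_comm])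
    have hpull := condExp_mul_of_stronglyMeasurable_left (m := (MeasurableSpace.comap m inferInstance)) (μ := μ)
      (stronglyMeasurable_condExp (f := fun ω => X ω i)) hfg (hXiInt i)
    have : ∫ ω, X ω i * gi i ω ∂μ = ∫ ω, (gi i * fun ω => X ω i) ω ∂μ :=
      integral_congr_ae (Filter.Eventually.of_forall fun ω => by simp [mul_comm])
    rw [this, ← integral_condExp hm' (f := (gi i * fun ω => X ω i))]
    refine integral_congr_ae (hpull.mono fun ω h => ?_)
    rw [h]; simp [hgidef]; ring
  -- coordinates of T
  have hTi : ∀ i, (fun ω => T ω i) =ᵐ[μ] gi i := by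
    intro i
    have h := my_condexp_clm hm' (EuclideanSpace.proj (𝕜 := ℝ) (ι := Fin n) i)
      (hX2.integrable one_le_two)
    simpa [PiLp.proj_apply] using h
  -- per-coordinate identity
  have hperi : ∀ i, ∫ ω, (X ω i - Xhat ω i) ^ 2 ∂μ = 2 * ∫ ω, (X ω i - T ω i) ^ 2 ∂μ := by
    intro i
    have e1 : ∫ ω, (X ω i - Xhat ω i) ^ 2 ∂μ
        = (∫ ω, X ω i ^ 2 ∂μ + ∫ ω, Xhat ω i ^ 2 ∂μ) - 2 * ∫ ω, X ω i * Xhat ω i ∂μ := by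
      have hadd : Integrable (fun ω => X ω i ^ 2 + Xhat ω i ^ 2) μ := (hXisq i).add (hYisq i)
      have hcm : Integrable (fun ω => 2 * (X ω i * Xhat ω i)) μ := (hXYint i).const_mul 2
      rw [← integral_const_mul, ← integral_add (hXisq i) (hYisq i), ← integral_sub hadd hcm]
      refine integral_congr_ae (Filter.Eventually.of_forall fun ω => ?_)
      simp only [Pi.add_apply]
      ring
    have e2 : ∫ ω, (X ω i - T ω i) ^ 2 ∂μ = ∫ ω, (X ω i - gi i ω) ^ 2 ∂μ :=
      integral_congr_ae ((hTi i).mono fun ω h => by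
        show (X ω i - T ω i) ^ 2 = (X ω i - gi i ω) ^ 2
        rw [show T ω i = gi i ω from h])
    have e3 : ∫ ω, (X ω i - gi i ω) ^ 2 ∂μ
        = (∫ ω, X ω i ^ 2 ∂μ + ∫ ω, gi i ω ^ 2 ∂μ) - 2 * ∫ ω, X ω i * gi i ω ∂μ := by
      have hadd : Integrable (fun ω => X ω i ^ 2 + gi i ω ^ 2) μ := (hXisq i).add (hgisq i)
      have hcm : Integrable (fun ω => 2 * (X ω i * gi i ω)) μ := (hXgiInt i).const_mul 2
      rw [← integral_const_mul, ← integral_add (hXisq i) (hgisq i), ← integral_sub hadd hcm]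
      refine integral_congr_ae (Filter.Eventually.of_forall fun ω => ?_)
      simp only [Pi.add_apply]
      ring
    rw [e1, e2, e3, hF5 i, hF6 i, hF7 i]
    ring
  -- summation
  have hnorm : ∀ v : EuclideanSpace ℝ (Fin n), ‖v‖ ^ 2 = ∑ i, v i ^ 2 := by
    intro v
    rw [EuclideanSpace.norm_eq, Real.sq_sqrt (by positivity)]
    simp [Real.norm_eq_abs, sq_abs]
  have hsub : ∀ (v w : EuclideanSpace ℝ (Fin n)) (i : Fin n), (v - w) i = v i - w i :=
    fun v w i => rfl
  have hIntXY : ∀ i, Integrable (fun ω => (X ω i - Xhat ω i) ^ 2) μ := fun i =>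
    ((hXi2 i).sub (hYi2 i)).integrable_sq
  have hIntXg : ∀ i, Integrable (fun ω => (X ω i - gi i ω) ^ 2) μ := by
    intro i
    have hfe : (fun ω => (X ω i - gi i ω) ^ 2)
        = fun ω => (X ω i ^ 2 - 2 * (X ω i * gi i ω)) + gi i ω ^ 2 := by
      funext ω; ring
    rw [hfe]
    exact ((hXisq i).sub ((hXgiInt i).const_mul 2)).add (hgisq i)
  have hIntXT : ∀ i, Integrable (fun ω => (X ω i - T ω i) ^ 2) μ := by
    intro i
    exact (hIntXg i).congr ((hTi i).mono fun ω h => by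
      show (X ω i - gi i ω) ^ 2 = (X ω i - T ω i) ^ 2
      rw [show T ω i = gi i ω from h])
  have hL : ∫ ω, ‖X ω - Xhat ω‖ ^ 2 ∂μ = ∑ i, ∫ ω, (X ω i - Xhat ω i) ^ 2 ∂μ := by
    rw [← integral_finset_sum _ fun i _ => hIntXY i]
    refine integral_congr_ae (Filter.Eventually.of_forall fun ω => ?_)
    show ‖X ω - Xhat ω‖ ^ 2 = ∑ i, (X ω i - Xhat ω i) ^ 2
    rw [hnorm]
    exact Finset.sum_congr rfl fun i _ => by rw [hsub]
  have hR : ∫ ω, ‖X ω - T ω‖ ^ 2 ∂μ = ∑ i, ∫ ω, (X ω i - T ω i) ^ 2 ∂μ := by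
    rw [← integral_finset_sum _ fun i _ => hIntXT i]
    refine integral_congr_ae (Filter.Eventually.of_forall fun ω => ?_)
    show ‖X ω - T ω‖ ^ 2 = ∑ i, (X ω i - T ω i) ^ 2
    rw [hnorm]
    exact Finset.sum_congr rfl fun i _ => by rw [hsub]
  rw [hL, hR, Finset.mul_sum]
  exact Finset.sum_congr rfl fun i _ => hperi i
end

section
/- Triangle-type bound for the distortion-perception tradeoff at a given encoder: if E[‖X − X̃‖²] = D₀ and the reconstruction X̂ is required to satisfy W₂(P_X, P_{X̂}) ≤ √P and to be a function of X̃ (through a coupling achieving optimal transport from P_{X̃} to P_{X̂}), then E[‖X − X̂‖²] ≥ D₀ + ((W₂(P_X, P_{X̃}) − √P)₊)². -/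
open MeasureTheory ProbabilityTheory

/-- Squared Wasserstein-2 distance between two Borel probability measures on `ℝⁿ`,
defined as the infimum of the quadratic transport cost over all couplings. -/
noncomputable def W2sq {n : ℕ}
    (p q : Measure (EuclideanSpace ℝ (Fin n))) : ℝ :=
  sInf { r : ℝ | ∃ π : Measure (EuclideanSpace ℝ (Fin n) × EuclideanSpace ℝ (Fin n)),
    π.map Prod.fst = p ∧ π.map Prod.snd = q ∧ r = ∫ z, ‖z.1 - z.2‖ ^ 2 ∂π }

abbrev Euc (n : ℕ) := EuclideanSpace ℝ (Fin n)

section Aux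

variable {n : ℕ}

lemma W2sq_set_nonneg {p q : Measure (Euc n)} :
    ∀ r ∈ { r : ℝ | ∃ π : Measure (Euc n × Euc n),
      π.map Prod.fst = p ∧ π.map Prod.snd = q ∧ r = ∫ z, ‖z.1 - z.2‖ ^ 2 ∂π }, 0 ≤ r := by
  rintro r ⟨π, -, -, rfl⟩
  exact integral_nonneg fun z => by positivity

lemma W2sq_le_of_mem {p q : Measure (Euc n)} {r : ℝ}
    (hr : r ∈ { r : ℝ | ∃ π : Measure (Euc n × Euc n),
      π.map Prod.fst = p ∧ π.map Prod.snd = q ∧ r = ∫ z, ‖z.1 - z.2‖ ^ 2 ∂π }) :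
    W2sq p q ≤ r :=
  csInf_le ⟨0, fun s hs => W2sq_set_nonneg s hs⟩ hr

lemma W2sq_set_nonempty (p q : Measure (Euc n))
    [IsProbabilityMeasure p] [IsProbabilityMeasure q] :
    Set.Nonempty { r : ℝ | ∃ π : Measure (Euc n × Euc n),
      π.map Prod.fst = p ∧ π.map Prod.snd = q ∧ r = ∫ z, ‖z.1 - z.2‖ ^ 2 ∂π } := by
  refine ⟨_, p.prod q, ?_, ?_, rfl⟩
  · exact Measure.fst_prod
  · exact Measure.snd_prod

lemma W2sq_nonneg (p q : Measure (Euc n))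
    [IsProbabilityMeasure p] [IsProbabilityMeasure q] :
    0 ≤ W2sq p q :=
  le_csInf (W2sq_set_nonempty p q) (fun s hs => W2sq_set_nonneg s hs)

lemma integral_norm_sq_eq {α : Type*} [MeasurableSpace α] {μ : Measure α}
    {g : α → Euc n} (hg : MemLp g 2 μ) :
    ∫ a, ‖g a‖ ^ 2 ∂μ = ‖hg.toLp g‖ ^ 2 := by
  rw [← real_inner_self_eq_norm_sq, L2.inner_def]
  refine (integral_congr_ae ?_).symm
  filter_upwards [hg.coeFn_toLp] with a ha
  rw [ha, real_inner_self_eq_norm_sq]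

lemma l2tri {α : Type*} [MeasurableSpace α] {μ : Measure α}
    {f g : α → Euc n} (hf : MemLp f 2 μ) (hg : MemLp g 2 μ) :
    ∫ a, ‖f a + g a‖ ^ 2 ∂μ
      ≤ (Real.sqrt (∫ a, ‖f a‖ ^ 2 ∂μ) + Real.sqrt (∫ a, ‖g a‖ ^ 2 ∂μ)) ^ 2 := by
  have hfg : MemLp (fun a => f a + g a) 2 μ := hf.add hg
  have h1 : ∫ a, ‖f a + g a‖ ^ 2 ∂μ = ‖hfg.toLp _‖ ^ 2 := integral_norm_sq_eq hfg
  have h2 : hfg.toLp _ = hf.toLp f + hg.toLp g := by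
    exact MemLp.toLp_add hf hg
  rw [h1, h2, integral_norm_sq_eq hf, integral_norm_sq_eq hg,
    Real.sqrt_sq (norm_nonneg _), Real.sqrt_sq (norm_nonneg _)]
  have h3 := norm_add_le (hf.toLp f) (hg.toLp g)
  have h4 : (0:ℝ) ≤ ‖hf.toLp f + hg.toLp g‖ := norm_nonneg _
  nlinarith [norm_nonneg (hf.toLp f), norm_nonneg (hg.toLp g)]

/-- Gluing bound: if `π'` is a coupling of the laws of `Y` and `Z`, then
`W₂(law Y, law T) ≤ √(cost π') + ‖Z - T‖_{L²}`. -/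
lemma glue_bound {Ω : Type*} [MeasurableSpace Ω] {μ : Measure Ω} [IsProbabilityMeasure μ]
    (Y T Z : Ω → Euc n)
    (hY : Measurable Y) (hT : Measurable T) (hZ : Measurable Z)
    (hY2 : MemLp Y 2 μ) (hT2 : MemLp T 2 μ) (hZ2 : MemLp Z 2 μ)
    (π' : Measure (Euc n × Euc n))
    (hπ1 : π'.map Prod.fst = μ.map Y) (hπ2 : π'.map Prod.snd = μ.map Z) :
    Real.sqrt (W2sq (μ.map Y) (μ.map T))
      ≤ Real.sqrt (∫ z, ‖z.1 - z.2‖ ^ 2 ∂π') + Real.sqrt (∫ ω, ‖Z ω - T ω‖ ^ 2 ∂μ) := by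
  haveI : IsProbabilityMeasure (μ.map Y) := Measure.isProbabilityMeasure_map hY.aemeasurable
  haveI : IsProbabilityMeasure (μ.map T) := Measure.isProbabilityMeasure_map hT.aemeasurable
  haveI : IsProbabilityMeasure (μ.map Z) := Measure.isProbabilityMeasure_map hZ.aemeasurable
  haveI hπ'p : IsProbabilityMeasure π' := by
    constructor
    have h := congrArg (fun ν : Measure (Euc n) => ν Set.univ) hπ1
    simp only [Measure.map_apply measurable_fst MeasurableSet.univ, Set.preimage_univ] at h
    rw [h]
    exact measure_univ
  set σ : Measure (Euc n × Euc n) := π'.map Prod.swap with hσdef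
  haveI : IsProbabilityMeasure σ := Measure.isProbabilityMeasure_map measurable_swap.aemeasurable
  set ρ : Measure (Euc n × Euc n) := μ.map (fun ω => (Z ω, T ω)) with hρdef
  haveI : IsProbabilityMeasure ρ := Measure.isProbabilityMeasure_map (hZ.prodMk hT).aemeasurable
  set κ := ρ.condKernel with hκdef
  set κ' := κ.comap Prod.fst measurable_fst with hκ'def
  set τ : Measure ((Euc n × Euc n) × Euc n) := σ.compProd κ' with hτdef
  -- marginals of σ
  have hσfst : σ.map Prod.fst = μ.map Z := by
    rw [hσdef, Measure.map_map measurable_fst measurable_swap]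
    exact hπ2
  have hσsnd : σ.map Prod.snd = μ.map Y := by
    rw [hσdef, Measure.map_map measurable_snd measurable_swap]
    exact hπ1
  have hρfst : ρ.fst = μ.map Z := by
    show ρ.map Prod.fst = μ.map Z
    rw [hρdef, Measure.map_map measurable_fst (hZ.prodMk hT)]
    rfl
  have hρsnd : ρ.map Prod.snd = μ.map T := by
    rw [hρdef, Measure.map_map measurable_snd (hZ.prodMk hT)]
    rfl
  have hρdis : ρ.fst.compProd κ = ρ := ρ.disintegrate κ
  set φ : (Euc n × Euc n) × Euc n → Euc n × Euc n := fun p => (p.1.1, p.2) with hφdef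
  have hφ : Measurable φ := (measurable_fst.comp measurable_fst).prodMk measurable_snd
  set ψ : (Euc n × Euc n) × Euc n → Euc n × Euc n := fun p => (p.1.2, p.2) with hψdef
  have hψ : Measurable ψ := (measurable_snd.comp measurable_fst).prodMk measurable_snd
  -- τ.map φ = ρ
  have hτφ : τ.map φ = ρ := by
    ext s hs
    rw [Measure.map_apply hφ hs, hτdef, Measure.compProd_apply (hφ hs)]
    have hint : ∀ ab : Euc n × Euc n, κ' ab (Prod.mk ab ⁻¹' (φ ⁻¹' s)) = κ ab.1 (Prod.mk ab.1 ⁻¹' s) := by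
      intro ab
      rw [hκ'def, Kernel.comap_apply]
      congr 1
    rw [lintegral_congr hint]
    have hmap : ρ.fst = σ.map Prod.fst := by rw [hσfst, hρfst]
    rw [← hρdis, Measure.compProd_apply hs, hmap,
      lintegral_map (Kernel.measurable_kernel_prodMk_left hs) measurable_fst]
  have hτfst : τ.map Prod.fst = σ := Measure.fst_compProd σ κ'
  set γ : Measure (Euc n × Euc n) := τ.map ψ with hγdef
  -- marginals of γ
  have hγ1 : γ.map Prod.fst = μ.map Y := by
    rw [hγdef, Measure.map_map measurable_fst hψ]
    have : (Prod.fst ∘ ψ) = (Prod.snd ∘ Prod.fst : (Euc n × Euc n) × Euc n → Euc n) := rfl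
    rw [this, ← Measure.map_map measurable_snd measurable_fst, hτfst, hσsnd]
  have hγ2 : γ.map Prod.snd = μ.map T := by
    rw [hγdef, Measure.map_map measurable_snd hψ]
    have : (Prod.snd ∘ ψ) = (Prod.snd ∘ φ : (Euc n × Euc n) × Euc n → Euc n) := rfl
    rw [this, ← Measure.map_map measurable_snd hφ, hτφ, hρsnd]
  -- membership of the cost of γ
  have hmem : W2sq (μ.map Y) (μ.map T) ≤ ∫ z, ‖z.1 - z.2‖ ^ 2 ∂γ :=
    W2sq_le_of_mem ⟨γ, hγ1, hγ2, rfl⟩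
  -- transfer to τ
  have hcostmeas : Measurable fun z : Euc n × Euc n => ‖z.1 - z.2‖ ^ 2 :=
    ((measurable_fst.sub measurable_snd).norm).pow_const 2
  have hγcost : ∫ z, ‖z.1 - z.2‖ ^ 2 ∂γ = ∫ p, ‖p.1.2 - p.2‖ ^ 2 ∂τ := by
    rw [hγdef, integral_map hψ.aemeasurable hcostmeas.aestronglyMeasurable]
  -- MemLp facts
  have hidY : MemLp (id : Euc n → Euc n) 2 (μ.map Y) :=
    (memLp_map_measure_iff aestronglyMeasurable_id hY.aemeasurable).2 hY2
  have hidT : MemLp (id : Euc n → Euc n) 2 (μ.map T) :=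
    (memLp_map_measure_iff aestronglyMeasurable_id hT.aemeasurable).2 hT2
  have hidZ : MemLp (id : Euc n → Euc n) 2 (μ.map Z) :=
    (memLp_map_measure_iff aestronglyMeasurable_id hZ.aemeasurable).2 hZ2
  have hσ1 : MemLp (fun q : Euc n × Euc n => q.1) 2 σ := by
    have h := (memLp_map_measure_iff aestronglyMeasurable_id measurable_fst.aemeasurable).1
      (hσfst ▸ hidZ)
    exact h
  have hσ2 : MemLp (fun q : Euc n × Euc n => q.2) 2 σ := by
    have h := (memLp_map_measure_iff aestronglyMeasurable_id measurable_snd.aemeasurable).1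
      (hσsnd ▸ hidY)
    exact h
  have hρ1 : MemLp (fun q : Euc n × Euc n => q.1) 2 ρ := by
    have hmap : ρ.map Prod.fst = μ.map Z := hρfst
    have h := (memLp_map_measure_iff aestronglyMeasurable_id measurable_fst.aemeasurable).1
      (hmap ▸ hidZ)
    exact h
  have hρ2 : MemLp (fun q : Euc n × Euc n => q.2) 2 ρ := by
    have h := (memLp_map_measure_iff aestronglyMeasurable_id measurable_snd.aemeasurable).1
      (hρsnd ▸ hidT)
    exact h
  have hσsub : MemLp (fun q : Euc n × Euc n => q.2 - q.1) 2 σ := hσ2.sub hσ1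
  have hρsub : MemLp (fun q : Euc n × Euc n => q.1 - q.2) 2 ρ := hρ1.sub hρ2
  have hg1 : MemLp (fun p : (Euc n × Euc n) × Euc n => p.1.2 - p.1.1) 2 τ := by
    have h := (memLp_map_measure_iff
      ((measurable_snd.sub measurable_fst).aestronglyMeasurable) measurable_fst.aemeasurable).1
      (hτfst ▸ hσsub)
    exact h
  have hg2 : MemLp (fun p : (Euc n × Euc n) × Euc n => p.1.1 - p.2) 2 τ := by
    have h := (memLp_map_measure_iff
      ((measurable_fst.sub measurable_snd).aestronglyMeasurable) hφ.aemeasurable).1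
      (hτφ ▸ hρsub)
    exact h
  -- triangle in L²(τ)
  have htri : ∫ p, ‖p.1.2 - p.2‖ ^ 2 ∂τ
      ≤ (Real.sqrt (∫ p, ‖p.1.2 - p.1.1‖ ^ 2 ∂τ)
          + Real.sqrt (∫ p, ‖p.1.1 - p.2‖ ^ 2 ∂τ)) ^ 2 := by
    have h := l2tri hg1 hg2
    simpa [sub_add_sub_cancel] using h
  -- identify the two integrals
  have hc1 : ∫ p, ‖p.1.2 - p.1.1‖ ^ 2 ∂τ = ∫ z, ‖z.1 - z.2‖ ^ 2 ∂π' := by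
    have hmeas : Measurable fun q : Euc n × Euc n => ‖q.2 - q.1‖ ^ 2 :=
      ((measurable_snd.sub measurable_fst).norm).pow_const 2
    have h1 : ∫ p, ‖p.1.2 - p.1.1‖ ^ 2 ∂τ = ∫ q, ‖q.2 - q.1‖ ^ 2 ∂σ := by
      rw [← hτfst, integral_map measurable_fst.aemeasurable hmeas.aestronglyMeasurable]
    rw [h1, hσdef, integral_map measurable_swap.aemeasurable hmeas.aestronglyMeasurable]
    rfl
  have hc2 : ∫ p, ‖p.1.1 - p.2‖ ^ 2 ∂τ = ∫ ω, ‖Z ω - T ω‖ ^ 2 ∂μ := by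
    have h1 : ∫ p, ‖p.1.1 - p.2‖ ^ 2 ∂τ = ∫ q, ‖q.1 - q.2‖ ^ 2 ∂ρ := by
      rw [← hτφ, integral_map hφ.aemeasurable hcostmeas.aestronglyMeasurable]
    rw [h1, hρdef, integral_map (hZ.prodMk hT).aemeasurable hcostmeas.aestronglyMeasurable]
  rw [hc1, hc2] at htri
  have h0 : W2sq (μ.map Y) (μ.map T)
      ≤ (Real.sqrt (∫ z, ‖z.1 - z.2‖ ^ 2 ∂π')
          + Real.sqrt (∫ ω, ‖Z ω - T ω‖ ^ 2 ∂μ)) ^ 2 := by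
    rw [hγcost] at hmem
    linarith
  calc Real.sqrt (W2sq (μ.map Y) (μ.map T)) ≤ Real.sqrt ((Real.sqrt (∫ z, ‖z.1 - z.2‖ ^ 2 ∂π')
          + Real.sqrt (∫ ω, ‖Z ω - T ω‖ ^ 2 ∂μ)) ^ 2) := Real.sqrt_le_sqrt h0
    _ = _ := Real.sqrt_sq (by positivity)

end Aux

set_option maxHeartbeats 1000000 in
/-- Distortion-perception tradeoff at a given encoder: if `X̃ = E[X|m]` has
`E[‖X − X̃‖²] = D₀` and the reconstruction `X̂ = f(X̃)` satisfies the perception constraint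
`W₂(P_X, P_X̂) ≤ √P`, then `E[‖X − X̂‖²] ≥ D₀ + ((W₂(P_X, P_X̃) − √P)₊)²`. -/
theorem stmt_16 {Ω β : Type*} [MeasurableSpace Ω] [MeasurableSpace β]
    {μ : Measure Ω} [IsProbabilityMeasure μ] {n : ℕ}
    (X : Ω → EuclideanSpace ℝ (Fin n)) (m : Ω → β)
    (hX : Measurable X) (hm : Measurable m) (hX2 : MemLp X 2 μ)
    (Xt : Ω → EuclideanSpace ℝ (Fin n))
    (hXt : Xt = μ[X | MeasurableSpace.comap m inferInstance])
    (f : EuclideanSpace ℝ (Fin n) → EuclideanSpace ℝ (Fin n)) (hf : Measurable f)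
    (hf2 : MemLp (fun ω => f (Xt ω)) 2 μ)
    (D₀ P : ℝ) (hP : 0 ≤ P)
    (hD₀ : ∫ ω, ‖X ω - Xt ω‖ ^ 2 ∂μ = D₀)
    (hperc : Real.sqrt (W2sq (μ.map X) (μ.map (fun ω => f (Xt ω)))) ≤ Real.sqrt P) :
    D₀ + (max (Real.sqrt (W2sq (μ.map X) (μ.map Xt)) - Real.sqrt P) 0) ^ 2
      ≤ ∫ ω, ‖X ω - f (Xt ω)‖ ^ 2 ∂μ := by
  have h𝔪 : MeasurableSpace.comap m inferInstance ≤ ‹MeasurableSpace Ω› := hm.comap_le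
  haveI : IsFiniteMeasure (μ.trim h𝔪) := isFiniteMeasure_trim h𝔪
  haveI : SigmaFinite (μ.trim h𝔪) := inferInstance
  set XL : Lp (Euc n) 2 μ := hX2.toLp X with hXLdef
  set YL : Lp (Euc n) 2 μ := (condExpL2 (Euc n) ℝ h𝔪 XL : Lp (Euc n) 2 μ) with hYLdef
  -- the conditional expectation agrees with the L² projection
  have hYX : (YL : Ω → Euc n) =ᵐ[μ] μ[X | MeasurableSpace.comap m inferInstance] := by
    refine ae_eq_condExp_of_forall_setIntegral_eq h𝔪 (hX2.integrable one_le_two)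
      (fun s _ _ => ((Lp.memLp YL).integrable one_le_two).integrableOn)
      (fun s hs hμs => ?_) ?_
    · rw [hYLdef]
      rw [integral_condExpL2_eq h𝔪 XL hs hμs.ne]
      refine setIntegral_congr_ae (h𝔪 s hs) ?_
      filter_upwards [hX2.coeFn_toLp] with ω hω _
      exact hω
    · exact aestronglyMeasurable_condExpL2 h𝔪 XL
  have hXtY : Xt =ᵐ[μ] (YL : Ω → Euc n) := by rw [hXt]; exact hYX.symm
  have hXt2 : MemLp Xt 2 μ := (Lp.memLp YL).ae_eq hXtY.symm
  have hXtsm : StronglyMeasurable[MeasurableSpace.comap m inferInstance] Xt := by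
    rw [hXt]; exact stronglyMeasurable_condExp
  have hXtMeas : Measurable Xt := (hXtsm.mono h𝔪).measurable
  set TL : Lp (Euc n) 2 μ := hXt2.toLp Xt with hTLdef
  have hTL : TL = YL := by
    rw [hTLdef, MemLp.toLp_congr hXt2 (Lp.memLp YL) hXtY]
    exact Lp.toLp_coeFn YL (Lp.memLp YL)
  set FL : Lp (Euc n) 2 μ := hf2.toLp _ with hFLdef
  set ZL : Lp (Euc n) 2 μ := TL - FL with hZLdef
  have hZcoe : (ZL : Ω → Euc n) =ᵐ[μ] fun ω => Xt ω - f (Xt ω) := by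
    filter_upwards [Lp.coeFn_sub TL FL, hXt2.coeFn_toLp, hf2.coeFn_toLp] with ω h1 h2 h3
    refine h1.trans ?_
    rw [Pi.sub_apply, hTLdef, hFLdef, h2, h3]
  have hZsm : StronglyMeasurable[MeasurableSpace.comap m inferInstance]
      fun ω => Xt ω - f (Xt ω) :=
    hXtsm.sub ((hf.comp hXtsm.measurable).stronglyMeasurable)
  have hZmeas' : AEStronglyMeasurable[MeasurableSpace.comap m inferInstance]
      (ZL : Ω → Euc n) μ :=
    AEStronglyMeasurable.congr hZsm.aestronglyMeasurable hZcoe.symm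
  -- orthogonality
  have horth : (inner ℝ (XL - TL) ZL : ℝ) = 0 := by
    rw [inner_sub_left, hTL, hYLdef, sub_eq_zero]
    exact (inner_condExpL2_eq_inner_fun (𝕜 := ℝ) h𝔪 XL ZL hZmeas').symm
  -- Pythagoras
  have hsub1 : ∫ ω, ‖X ω - Xt ω‖ ^ 2 ∂μ = ‖XL - TL‖ ^ 2 := by
    rw [show XL - TL = (hX2.sub hXt2).toLp (X - Xt) from (MemLp.toLp_sub hX2 hXt2).symm]
    rw [← integral_norm_sq_eq (hX2.sub hXt2)]
    rfl
  have hsub2 : ∫ ω, ‖Xt ω - f (Xt ω)‖ ^ 2 ∂μ = ‖ZL‖ ^ 2 := by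
    have h := integral_norm_sq_eq (hXt2.sub hf2)
    rw [show (hXt2.sub hf2).toLp _ = TL - FL from MemLp.toLp_sub hXt2 hf2] at h
    rw [hZLdef]
    exact h
  have hsub3 : ∫ ω, ‖X ω - f (Xt ω)‖ ^ 2 ∂μ = ‖XL - FL‖ ^ 2 := by
    have h := integral_norm_sq_eq (hX2.sub hf2)
    rw [show (hX2.sub hf2).toLp _ = XL - FL from MemLp.toLp_sub hX2 hf2] at h
    exact h
  have hpyth : ∫ ω, ‖X ω - f (Xt ω)‖ ^ 2 ∂μ
      = D₀ + ∫ ω, ‖Xt ω - f (Xt ω)‖ ^ 2 ∂μ := by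
    have hdecomp : XL - FL = (XL - TL) + ZL := by rw [hZLdef]; abel
    rw [hsub3, hdecomp, norm_add_sq_real, horth, hsub2, ← hD₀, hsub1]
    ring
  have hc2 : (0:ℝ) ≤ ∫ ω, ‖Xt ω - f (Xt ω)‖ ^ 2 ∂μ :=
    integral_nonneg fun ω => by positivity
  set c2 : ℝ := ∫ ω, ‖Xt ω - f (Xt ω)‖ ^ 2 ∂μ with hc2def
  -- perception constraint gives W2sq ≤ P
  haveI : IsProbabilityMeasure (μ.map X) := Measure.isProbabilityMeasure_map hX.aemeasurable
  haveI : IsProbabilityMeasure (μ.map fun ω => f (Xt ω)) :=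
    Measure.isProbabilityMeasure_map (hf.comp hXtMeas).aemeasurable
  have hW2nn : 0 ≤ W2sq (μ.map X) (μ.map fun ω => f (Xt ω)) :=
    W2sq_nonneg _ _
  have hW2P : W2sq (μ.map X) (μ.map fun ω => f (Xt ω)) ≤ P := by
    nlinarith [Real.sq_sqrt hW2nn, Real.sq_sqrt hP, Real.sqrt_nonneg P,
      Real.sqrt_nonneg (W2sq (μ.map X) (μ.map fun ω => f (Xt ω)))]
  -- gluing bound for every ε > 0
  have hkey : ∀ ε : ℝ, 0 < ε →
      Real.sqrt (W2sq (μ.map X) (μ.map Xt))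
        ≤ Real.sqrt P + Real.sqrt c2 + Real.sqrt ε := by
    intro ε hε
    have hlt : sInf { r : ℝ | ∃ π : Measure (Euc n × Euc n),
        π.map Prod.fst = μ.map X ∧ π.map Prod.snd = (μ.map fun ω => f (Xt ω)) ∧
        r = ∫ z, ‖z.1 - z.2‖ ^ 2 ∂π } < P + ε := by
      have : W2sq (μ.map X) (μ.map fun ω => f (Xt ω)) < P + ε := by linarith
      exact this
    obtain ⟨r, ⟨π', hπ1, hπ2, hrcost⟩, hrlt⟩ :=
      exists_lt_of_csInf_lt (W2sq_set_nonempty _ _) hlt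
    have hrnn : 0 ≤ r := hrcost ▸ integral_nonneg fun z => by positivity
    have hg := glue_bound X Xt (fun ω => f (Xt ω)) hX hXtMeas (hf.comp hXtMeas)
      hX2 hXt2 hf2 π' hπ1 hπ2
    rw [← hrcost] at hg
    have hc2' : ∫ ω, ‖f (Xt ω) - Xt ω‖ ^ 2 ∂μ = c2 := by
      rw [hc2def]
      refine integral_congr_ae (Filter.Eventually.of_forall fun ω => ?_)
      simp only [norm_sub_rev]
    rw [hc2'] at hg
    have hsqr : Real.sqrt r ≤ Real.sqrt P + Real.sqrt ε := by
      have h1 : Real.sqrt r ≤ Real.sqrt (P + ε) := Real.sqrt_le_sqrt (le_of_lt hrlt)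
      have h2 : P + ε ≤ (Real.sqrt P + Real.sqrt ε) ^ 2 := by
        nlinarith [Real.sq_sqrt hP, Real.sq_sqrt hε.le, Real.sqrt_nonneg P,
          Real.sqrt_nonneg ε]
      have h3 : Real.sqrt (P + ε) ≤ Real.sqrt P + Real.sqrt ε := by
        calc Real.sqrt (P + ε) ≤ Real.sqrt ((Real.sqrt P + Real.sqrt ε) ^ 2) :=
              Real.sqrt_le_sqrt h2
          _ = Real.sqrt P + Real.sqrt ε := Real.sqrt_sq (by positivity)
      linarith
    linarith
  have hlim : Real.sqrt (W2sq (μ.map X) (μ.map Xt))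
      ≤ Real.sqrt P + Real.sqrt c2 := by
    refine le_of_forall_pos_le_add fun δ hδ => ?_
    have := hkey (δ ^ 2) (by positivity)
    rwa [Real.sqrt_sq hδ.le] at this
  have hmax : max (Real.sqrt (W2sq (μ.map X) (μ.map Xt)) - Real.sqrt P) 0
      ≤ Real.sqrt c2 := by
    refine max_le (by linarith) (Real.sqrt_nonneg _)
  have hmaxnn : (0:ℝ) ≤ max (Real.sqrt (W2sq (μ.map X) (μ.map Xt)) - Real.sqrt P) 0 :=
    le_max_right _ _
  have hsq : (max (Real.sqrt (W2sq (μ.map X) (μ.map Xt)) - Real.sqrt P) 0) ^ 2 ≤ c2 := by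
    have := pow_le_pow_left₀ hmaxnn hmax 2
    rwa [Real.sq_sqrt hc2] at this
  rw [hpyth]
  linarith
end
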